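/- Affine-invariant Newton–Kantorovich theorem (existence part): Let X and Y be real Banach spaces, û ∈ X, and α, β, δ > 0. Let D be the open ball in X of radius 2α + δ centered at û. Let F : X → Y and F' : X → L(X, Y) be maps such that F has Fréchet derivative F'(v) at every point v ∈ D. Suppose there is a continuous linear equivalence A : X ≃ Y whose underlying continuous linear map equals F'(û), and that: ‖A⁻¹(F(û))‖ ≤ α; ‖A⁻¹ ∘ (F'(v) − F'(w))‖_{L(X,X)} ≤ β‖v − w‖ for all v, w ∈ D; and αβ ≤ 1/2. Set ρ = (1 − √(1 − 2αβ))/β. Then there exists u in the closed ball of radius ρ centered at û with F(u) = 0. -/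

import Mathlib

set_option maxHeartbeats 2000000 in
open Filter intervalIntegral in
/-- Affine-invariant Newton–Kantorovich theorem (existence part). -/
theorem newton_kantorovich_existence
    {X Y : Type*} [NormedAddCommGroup X] [NormedSpace ℝ X] [CompleteSpace X]
    [NormedAddCommGroup Y] [NormedSpace ℝ Y] [CompleteSpace Y]
    (uhat : X) (α β δ : ℝ) (hα : 0 < α) (hβ : 0 < β) (hδ : 0 < δ)
    (F : X → Y) (F' : X → X →L[ℝ] Y)
    (hderiv : ∀ v ∈ Metric.ball uhat (2 * α + δ), HasFDerivAt F (F' v) v)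
    (A : X ≃L[ℝ] Y) (hA : (A : X →L[ℝ] Y) = F' uhat)
    (hα' : ‖(A.symm : Y →L[ℝ] X) (F uhat)‖ ≤ α)
    (hβ' : ∀ v ∈ Metric.ball uhat (2 * α + δ), ∀ w ∈ Metric.ball uhat (2 * α + δ),
      ‖(A.symm : Y →L[ℝ] X).comp (F' v - F' w)‖ ≤ β * ‖v - w‖)
    (hαβ : α * β ≤ 1 / 2) :
    ∃ u ∈ Metric.closedBall uhat ((1 - Real.sqrt (1 - 2 * α * β)) / β), F u = 0 := by
  have h2ab : (0:ℝ) ≤ 1 - 2*α*β := by nlinarith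
  set q := Real.sqrt (1 - 2 * α * β) with hqdef
  have hq0 : 0 ≤ q := Real.sqrt_nonneg _
  have hq2 : q^2 = 1 - 2*α*β := Real.sq_sqrt h2ab
  have hq1 : q ≤ 1 := by nlinarith
  set ρ := (1 - q)/β with hρdef
  have hβρ : β * ρ = 1 - q := by rw [hρdef, mul_div_assoc', mul_div_cancel_left₀ _ hβ.ne']
  have hρ0 : 0 ≤ ρ := div_nonneg (by linarith) hβ.le
  have hρ2α : ρ ≤ 2*α := by rw [hρdef, div_le_iff₀ hβ]; nlinarith
  set p : ℝ → ℝ := fun t => β/2*t^2 - t + α with hpdef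
  have hpρ : p ρ = 0 := by
    simp only [hpdef, hρdef]
    field_simp
    nlinarith [hq2]
  have hpρe : β/2*ρ^2 - ρ + α = 0 := by
    have := hpρ; simp only [hpdef] at this; exact this
  -- key scalar lemma
  have key : ∀ t, 0 ≤ t → t ≤ ρ → 0 ≤ p t ∧ t + p t ≤ ρ := by
    intro t ht htρ
    have h1 : 0 ≤ 1 - β/2*(t+ρ) := by nlinarith
    have h2 : 0 ≤ (ρ - t) * (1 - β/2*(t+ρ)) := mul_nonneg (by linarith) h1
    have h3 : t*t ≤ ρ*ρ := mul_le_mul htρ htρ ht hρ0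
    constructor
    · simp only [hpdef]; nlinarith [hpρe]
    · simp only [hpdef]; nlinarith [hpρe]
  -- sequences
  set s : ℕ → ℝ := fun n => Nat.rec 0 (fun _ x => x + p x) n with hsdef
  have hsS : ∀ n, s (n+1) = s n + p (s n) := fun n => rfl
  have hs0 : s 0 = 0 := rfl
  have hsb : ∀ n, 0 ≤ s n ∧ s n ≤ ρ := by
    intro n; induction n with
    | zero => exact ⟨le_refl _, hρ0⟩
    | succ n ih =>
      obtain ⟨h0, h1⟩ := ih
      obtain ⟨hp0, hsum⟩ := key _ h0 h1
      rw [hsS]; exact ⟨by linarith, hsum⟩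
  have hmono : ∀ n, s n ≤ s (n+1) := by
    intro n; rw [hsS]; linarith [(key _ (hsb n).1 (hsb n).2).1]
  set u : ℕ → X := fun n => Nat.rec uhat (fun _ x => x - (A.symm : Y →L[ℝ] X) (F x)) n with hudef
  have huS : ∀ n, u (n+1) = u n - (A.symm : Y →L[ℝ] X) (F (u n)) := fun n => rfl
  have hu0 : u 0 = uhat := rfl
  -- membership in D
  have hmemD : ∀ x : X, ‖x - uhat‖ ≤ ρ → x ∈ Metric.ball uhat (2*α+δ) := by
    intro x hx
    rw [Metric.mem_ball, dist_eq_norm]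
    calc ‖x - uhat‖ ≤ ρ := hx
      _ < 2*α+δ := by linarith
  have huhatD : uhat ∈ Metric.ball uhat (2*α+δ) := hmemD uhat (by simp [hρ0])
  -- main induction
  have main : ∀ n, ‖u n - uhat‖ ≤ s n ∧ ‖(A.symm : Y →L[ℝ] X) (F (u n))‖ ≤ p (s n) := by
    intro n; induction n with
    | zero =>
      refine ⟨by simp [hu0, hs0], ?_⟩
      have : p (s 0) = α := by simp [hs0, hpdef]
      rw [hu0, this]; exact hα'
    | succ n ih =>
      obtain ⟨ih1, ih2⟩ := ih
      set v := u n with hvdef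
      set h : X := -((A.symm : Y →L[ℝ] X) (F v)) with hhdef
      have huS' : u (n+1) = v + h := by rw [huS, hhdef, sub_eq_add_neg]
      have hd : ‖h‖ ≤ p (s n) := by rw [hhdef, norm_neg]; exact ih2
      have hp0 : 0 ≤ p (s n) := (key _ (hsb n).1 (hsb n).2).1
      have hsn1ρ : s n + p (s n) ≤ ρ := (key _ (hsb n).1 (hsb n).2).2
      set w : ℝ → X := fun t => v + t • h with hwdef
      have hwnorm : ∀ t ∈ Set.Icc (0:ℝ) 1, ‖w t - uhat‖ ≤ s n + t * p (s n) := by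
        intro t ht
        have : w t - uhat = (v - uhat) + t • h := by rw [hwdef]; module
        rw [this]
        calc ‖(v - uhat) + t • h‖ ≤ ‖v - uhat‖ + ‖t • h‖ := norm_add_le _ _
          _ = ‖v - uhat‖ + |t| * ‖h‖ := by rw [norm_smul, Real.norm_eq_abs]
          _ = ‖v - uhat‖ + t * ‖h‖ := by rw [abs_of_nonneg ht.1]
          _ ≤ s n + t * p (s n) := by
              have := mul_le_mul_of_nonneg_left hd ht.1
              linarith
      have hwD : ∀ t ∈ Set.Icc (0:ℝ) 1, w t ∈ Metric.ball uhat (2*α+δ) := by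
        intro t ht
        apply hmemD
        calc ‖w t - uhat‖ ≤ s n + t * p (s n) := hwnorm t ht
          _ ≤ s n + 1 * p (s n) := by
              have := mul_le_mul_of_nonneg_right ht.2 hp0; linarith
          _ ≤ ρ := by linarith
      have huIcc : Set.uIcc (0:ℝ) 1 = Set.Icc 0 1 := Set.uIcc_of_le zero_le_one
      set g : ℝ → X := fun t => (A.symm : Y →L[ℝ] X) (F (w t)) with hgdef
      set g' : ℝ → X := fun t => (A.symm : Y →L[ℝ] X) ((F' (w t)) h) with hg'def
      have hg : ∀ t ∈ Set.uIcc (0:ℝ) 1, HasDerivAt g (g' t) t := by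
        intro t ht
        rw [huIcc] at ht
        have hw : HasDerivAt w h t := by
          have h1 : HasDerivAt (fun t : ℝ => t • h) ((1:ℝ) • h) t :=
            (hasDerivAt_id t).smul_const h
          rw [one_smul] at h1
          exact h1.const_add v
        have hF : HasFDerivAt F (F' (w t)) (w t) := hderiv _ (hwD t ht)
        have h2 : HasDerivAt (F ∘ w) ((F' (w t)) h) t := hF.comp_hasDerivAt t hw
        exact (A.symm : Y →L[ℝ] X).hasFDerivAt.comp_hasDerivAt t h2
      have hlip : LipschitzOnWith (Real.toNNReal (β*‖h‖*‖h‖)) g' (Set.uIcc (0:ℝ) 1) := by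
        apply LipschitzOnWith.of_dist_le_mul
        intro t1 ht1 t2 ht2
        rw [huIcc] at ht1 ht2
        rw [dist_eq_norm, dist_eq_norm]
        have heq : g' t1 - g' t2
            = ((A.symm : Y →L[ℝ] X).comp (F' (w t1) - F' (w t2))) h := by
          simp [hg'def, ContinuousLinearMap.comp_apply, ContinuousLinearMap.sub_apply]
        rw [heq]
        have hw12 : w t1 - w t2 = (t1 - t2) • h := by rw [hwdef]; simp; module
        calc ‖((A.symm : Y →L[ℝ] X).comp (F' (w t1) - F' (w t2))) h‖
            ≤ ‖(A.symm : Y →L[ℝ] X).comp (F' (w t1) - F' (w t2))‖ * ‖h‖ :=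
              ContinuousLinearMap.le_opNorm _ _
          _ ≤ (β * ‖w t1 - w t2‖) * ‖h‖ := by
              apply mul_le_mul_of_nonneg_right _ (norm_nonneg _)
              exact hβ' _ (hwD t1 ht1) _ (hwD t2 ht2)
          _ = (β * ‖h‖ * ‖h‖) * ‖t1 - t2‖ := by
              rw [hw12, norm_smul]; ring
          _ = ↑(Real.toNNReal (β*‖h‖*‖h‖)) * ‖t1 - t2‖ := by
              rw [Real.coe_toNNReal _ (by positivity)]
      have hint : IntervalIntegrable g' MeasureTheory.volume 0 1 :=
        hlip.continuousOn.intervalIntegrable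
      have hFTC : ∫ t in (0:ℝ)..1, g' t = g 1 - g 0 :=
        integral_eq_sub_of_hasDerivAt hg hint
      have hg1 : g 1 = (A.symm : Y →L[ℝ] X) (F (u (n+1))) := by
        rw [hgdef]; simp only [hwdef, one_smul, huS']
      have hg0 : g 0 = -h := by
        rw [hgdef]; simp only [hwdef, zero_smul, add_zero, hhdef, hvdef, neg_neg]
      have hAh : (A.symm : Y →L[ℝ] X) ((F' uhat) h) = h := by
        rw [← hA]; simp
      have hrepr : (A.symm : Y →L[ℝ] X) (F (u (n+1)))
          = ∫ t in (0:ℝ)..1, (g' t - (A.symm : Y →L[ℝ] X) ((F' uhat) h)) := by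
        rw [integral_sub hint intervalIntegrable_const, hFTC, hg1, hg0,
          integral_const, hAh]
        simp
      -- pointwise bound
      have hptwise : ∀ t ∈ Set.Icc (0:ℝ) 1,
          ‖g' t - (A.symm : Y →L[ℝ] X) ((F' uhat) h)‖ ≤ β * (s n + t * p (s n)) * p (s n) := by
        intro t ht
        have heq : g' t - (A.symm : Y →L[ℝ] X) ((F' uhat) h)
            = ((A.symm : Y →L[ℝ] X).comp (F' (w t) - F' uhat)) h := by
          simp [hg'def, ContinuousLinearMap.comp_apply, ContinuousLinearMap.sub_apply]
        rw [heq]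
        calc ‖((A.symm : Y →L[ℝ] X).comp (F' (w t) - F' uhat)) h‖
            ≤ ‖(A.symm : Y →L[ℝ] X).comp (F' (w t) - F' uhat)‖ * ‖h‖ :=
              ContinuousLinearMap.le_opNorm _ _
          _ ≤ (β * ‖w t - uhat‖) * ‖h‖ :=
              mul_le_mul_of_nonneg_right (hβ' _ (hwD t ht) _ huhatD) (norm_nonneg _)
          _ ≤ β * (s n + t * p (s n)) * p (s n) := by
              have h1 := hwnorm t ht
              have h2 : 0 ≤ s n + t * p (s n) := by
                have := mul_nonneg ht.1 hp0
                linarith [(hsb n).1]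
              have h3 : β * ‖w t - uhat‖ ≤ β * (s n + t * p (s n)) :=
                mul_le_mul_of_nonneg_left h1 hβ.le
              calc (β * ‖w t - uhat‖) * ‖h‖ ≤ (β * (s n + t * p (s n))) * ‖h‖ :=
                    mul_le_mul_of_nonneg_right h3 (norm_nonneg _)
                _ ≤ β * (s n + t * p (s n)) * p (s n) :=
                    mul_le_mul_of_nonneg_left hd (by positivity)
      -- integral of the bound
      have hbint : ∫ t in (0:ℝ)..1, β * (s n + t * p (s n)) * p (s n)
          = β * (s n * p (s n)) + β * (p (s n))^2 / 2 := by
        have hfun : (fun t : ℝ => β * (s n + t * p (s n)) * p (s n))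
            = fun t : ℝ => (β * s n * p (s n)) + (β * p (s n) * p (s n)) * t := by
          funext t; ring
        rw [hfun, integral_add intervalIntegrable_const
          (intervalIntegrable_id.const_mul _), integral_const,
          integral_const_mul, integral_id]
        simp; ring
      have hnorm1 : ‖(A.symm : Y →L[ℝ] X) (F (u (n+1)))‖
          ≤ β * (s n * p (s n)) + β * (p (s n))^2 / 2 := by
        rw [hrepr]
        have hb := norm_integral_le_of_norm_le
          (μ := MeasureTheory.volume) (a := (0:ℝ)) (b := (1:ℝ))
          (f := fun t => g' t - (A.symm : Y →L[ℝ] X) ((F' uhat) h))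
          (g := fun t => β * (s n + t * p (s n)) * p (s n))
          zero_le_one (Filter.Eventually.of_forall (by
            intro t ht
            exact hptwise t ⟨ht.1.le, ht.2⟩))
          ((Continuous.continuousOn (by fun_prop)).intervalIntegrable)
        rw [hbint] at hb
        have hnn1 : 0 ≤ β * (s n * p (s n)) := mul_nonneg hβ.le (mul_nonneg (hsb n).1 hp0)
        have hnn2 : 0 ≤ β * (p (s n))^2 / 2 := by positivity
        have habs : |β * (s n * p (s n)) + β * (p (s n))^2 / 2|
            = β * (s n * p (s n)) + β * (p (s n))^2 / 2 := abs_of_nonneg (add_nonneg hnn1 hnn2)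
        exact hb
      have hpid : p (s (n+1)) = β * (s n * p (s n)) + β * (p (s n))^2 / 2 := by
        rw [hsS]; simp only [hpdef]; ring
      constructor
      · have : u (n+1) - uhat = (v - uhat) + h := by rw [huS']; abel
        rw [this, hsS]
        calc ‖(v - uhat) + h‖ ≤ ‖v - uhat‖ + ‖h‖ := norm_add_le _ _
          _ ≤ s n + p (s n) := add_le_add ih1 hd
      · rw [hpid]; exact hnorm1
  -- convergence
  have hmonos : Monotone s := monotone_nat_of_le_succ hmono
  have hbdd : BddAbove (Set.range s) := ⟨ρ, by rintro _ ⟨n, rfl⟩; exact (hsb n).2⟩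
  have hconv : Tendsto s atTop (nhds (⨆ n, s n)) := tendsto_atTop_ciSup hmonos hbdd
  set l := ⨆ n, s n with hldef
  have hlρ : l ≤ ρ := ciSup_le fun n => (hsb n).2
  have hsl : ∀ n, s n ≤ l := fun n => le_ciSup hbdd n
  have hdist : ∀ n m, n ≤ m → dist (u n) (u m) ≤ s m - s n := by
    intro n m hnm
    induction m, hnm using Nat.le_induction with
    | base => simp
    | succ m hm ih =>
      have hstep : dist (u m) (u (m+1)) ≤ s (m+1) - s m := by
        rw [dist_eq_norm, huS, hsS]
        have : u m - (u m - (A.symm : Y →L[ℝ] X) (F (u m)))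
            = (A.symm : Y →L[ℝ] X) (F (u m)) := by abel
        rw [this]
        linarith [(main m).2]
      calc dist (u n) (u (m+1)) ≤ dist (u n) (u m) + dist (u m) (u (m+1)) :=
            dist_triangle _ _ _
        _ ≤ (s m - s n) + (s (m+1) - s m) := add_le_add ih hstep
        _ = s (m+1) - s n := by ring
  have hcauchy : CauchySeq u := by
    apply cauchySeq_of_le_tendsto_0 (fun N => l - s N)
    · intro m k N hm hk
      rcases le_total m k with hmk | hkm
      · calc dist (u m) (u k) ≤ s k - s m := hdist m k hmk
          _ ≤ l - s N := by linarith [hsl k, hmonos hm]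
      · rw [dist_comm]
        calc dist (u k) (u m) ≤ s m - s k := hdist k m hkm
          _ ≤ l - s N := by linarith [hsl m, hmonos hk]
    · have : Tendsto (fun N => l - s N) atTop (nhds (l - l)) :=
        tendsto_const_nhds.sub hconv
      simpa using this
  obtain ⟨ufin, hufin⟩ := cauchySeq_tendsto_of_complete hcauchy
  have hufinρ : dist ufin uhat ≤ ρ := by
    have h1 : Tendsto (fun n => dist (u n) uhat) atTop (nhds (dist ufin uhat)) :=
      hufin.dist tendsto_const_nhds
    apply le_of_tendsto h1
    filter_upwards with n
    rw [dist_eq_norm]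
    exact ((main n).1).trans (hsb n).2
  have hufinD : ufin ∈ Metric.ball uhat (2*α+δ) := by
    apply hmemD
    rw [← dist_eq_norm]; exact hufinρ
  have hpslim : Tendsto (fun n => p (s n)) atTop (nhds 0) := by
    have h1 : Tendsto (fun n => s (n+1) - s n) atTop (nhds (l - l)) :=
      (hconv.comp (tendsto_add_atTop_nat 1)).sub hconv
    have h2 : (fun n => s (n+1) - s n) = fun n => p (s n) := by
      funext n; rw [hsS]; ring
    rw [h2, sub_self] at h1
    exact h1
  have hAF0 : Tendsto (fun n => (A.symm : Y →L[ℝ] X) (F (u n))) atTop (nhds 0) :=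
    squeeze_zero_norm (fun n => (main n).2) hpslim
  have hAFlim : Tendsto (fun n => (A.symm : Y →L[ℝ] X) (F (u n))) atTop
      (nhds ((A.symm : Y →L[ℝ] X) (F ufin))) := by
    have hcF : ContinuousAt F ufin := (hderiv ufin hufinD).continuousAt
    exact (((A.symm : Y →L[ℝ] X).continuous.continuousAt).comp hcF).tendsto.comp hufin
  have hAFz : (A.symm : Y →L[ℝ] X) (F ufin) = 0 := tendsto_nhds_unique hAFlim hAF0
  have hFz : F ufin = 0 := by
    have := congrArg A hAFz
    simpa using this
  exact ⟨ufin, Metric.mem_closedBall.2 hufinρ, hFz⟩
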